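/- Let C be a regular unital category, u : Y ↣ X a monomorphism, and h : T → X a morphism commuting with u. If h = m ∘ ρ is a factorization of h with ρ : T ↠ V a regular epimorphism and m : V ↣ X a monomorphism, then m commutes with u. -/

import Mathlib

open CategoryTheory CategoryTheory.Limits

universe v u w v₂ u₂

section Commutation

variable {C : Type u} [Category.{v} C]

/-- A pair of morphisms with common codomain commutes when it admits a cooperator. -/
def Commutes [HasZeroMorphisms C] [HasBinaryProducts C] {X Y Z : C}
    (f : X ⟶ Z) (g : Y ⟶ Z) : Prop :=
  ∃ φ : X ⨯ Y ⟶ Z, prod.lift (𝟙 X) 0 ≫ φ = f ∧ prod.lift 0 (𝟙 Y) ≫ φ = g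

/-- A pair of morphisms is jointly strongly epic when any monomorphism through which
both factor is an isomorphism. -/
def JointlyStronglyEpic {X Y Z : C} (i : X ⟶ Z) (j : Y ⟶ Z) : Prop :=
  ∀ ⦃M : C⦄ (m : M ⟶ Z), Mono m → (∃ a : X ⟶ M, a ≫ m = i) →
    (∃ b : Y ⟶ M, b ≫ m = j) → IsIso m

/-- A pointed category is unital when the two canonical monomorphisms into any binary
product are jointly strongly epic. -/
def IsUnital (C : Type u) [Category.{v} C] [HasZeroMorphisms C]
    [HasBinaryProducts C] : Prop :=
  ∀ X Y : C, JointlyStronglyEpic (prod.lift (𝟙 X) (0 : X ⟶ Y)) (prod.lift (0 : Y ⟶ X) (𝟙 Y))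

/-- A pointed category is weakly unital when the two canonical morphisms into any
binary product are jointly epic. -/
def IsWeaklyUnital (C : Type u) [Category.{v} C] [HasZeroMorphisms C]
    [HasBinaryProducts C] : Prop :=
  ∀ (X Y Z : C) (a b : X ⨯ Y ⟶ Z), prod.lift (𝟙 X) 0 ≫ a = prod.lift (𝟙 X) 0 ≫ b →
    prod.lift 0 (𝟙 Y) ≫ a = prod.lift 0 (𝟙 Y) ≫ b → a = b

/-- `ζ` is a universal morphism commuting with `u`: it commutes with `u` and every
morphism commuting with `u` factors uniquely through it. -/
def IsUniversalCommuting [HasZeroMorphisms C] [HasBinaryProducts C] {Y X Z : C}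
    (u : Y ⟶ X) (ζ : Z ⟶ X) : Prop :=
  Commutes u ζ ∧ ∀ ⦃T : C⦄ (h : T ⟶ X), Commutes u h → ∃! t : T ⟶ Z, t ≫ ζ = h

end Commutation

section Regular

variable {C : Type u} [Category.{v} C]

/-- Kernel pairs admit coequalizers. -/
def KernelPairsHaveCoequalizers (C : Type u) [Category.{v} C] [HasPullbacks C] : Prop :=
  ∀ {X Y : C} (f : X ⟶ Y), HasCoequalizer (pullback.fst f f) (pullback.snd f f)

/-- Regular epimorphisms are stable under pullback. -/
def RegularEpisPullbackStable (C : Type u) [Category.{v} C] [HasPullbacks C] : Prop :=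
  ∀ {X Y Z : C} (f : X ⟶ Y) (g : Z ⟶ Y), Nonempty (RegularEpi f) →
    Nonempty (RegularEpi (pullback.snd f g))

/-- A regular category: finitely complete, kernel pairs have coequalizers, and regular
epimorphisms are stable under pullback. -/
def IsRegularCategory (C : Type u) [Category.{v} C] [HasFiniteLimits C] : Prop :=
  KernelPairsHaveCoequalizers C ∧ RegularEpisPullbackStable C

end Regular



section Aux

variable {C : Type u} [Category.{v} C] [HasFiniteLimits C] [HasZeroMorphisms C]

/-- In a unital category with equalizers, the canonical morphisms into a binary
product are jointly epic. -/
lemma unital_jointly_epi (hC : IsUnital C) {A B Z : C} (a b : A ⨯ B ⟶ Z)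
    (h1 : prod.lift (𝟙 A) 0 ≫ a = prod.lift (𝟙 A) 0 ≫ b)
    (h2 : prod.lift 0 (𝟙 B) ≫ a = prod.lift 0 (𝟙 B) ≫ b) : a = b := by
  have hmono : Mono (equalizer.ι a b) := inferInstance
  have hiso : IsIso (equalizer.ι a b) :=
    hC A B (equalizer.ι a b) hmono
      ⟨equalizer.lift _ h1, equalizer.lift_ι _ _⟩
      ⟨equalizer.lift _ h2, equalizer.lift_ι _ _⟩
  calc a = inv (equalizer.ι a b) ≫ equalizer.ι a b ≫ a := by simp
    _ = inv (equalizer.ι a b) ≫ equalizer.ι a b ≫ b := by rw [equalizer.condition]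
    _ = b := by simp

end Aux

/-- Statement 3: in a regular unital category, if `h = ρ ≫ m` commutes with a
monomorphism `u`, where `ρ` is a regular epimorphism and `m` a monomorphism, then
`m` commutes with `u`. -/
theorem statement3 (C : Type u) [Category.{v} C] [HasFiniteLimits C]
    [HasZeroObject C] [HasZeroMorphisms C]
    (hreg : IsRegularCategory C) (hC : IsUnital C)
    {Y X T V : C} (u : Y ⟶ X) (hu : Mono u)
    (h : T ⟶ X) (hcomm : Commutes u h)
    (ρ : T ⟶ V) (m : V ⟶ X) (hρ : Nonempty (RegularEpi ρ)) (hm : Mono m)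
    (hfac : ρ ≫ m = h) : Commutes u m := by

  classical
  obtain ⟨φ, hφ1, hφ2⟩ := hcomm
  haveI := hρ.some
  haveI : Epi ρ := RegularEpi.epi ρ hρ.some
  -- the pullback of ρ along itself
  set p₁ := pullback.fst ρ ρ with hp₁
  set p₂ := pullback.snd ρ ρ with hp₂
  -- key: φ coequalizes prod.map 𝟙 p₁ and prod.map 𝟙 p₂
  have key : prod.map (𝟙 Y) p₁ ≫ φ = prod.map (𝟙 Y) p₂ ≫ φ := by
    apply unital_jointly_epi hC
    · rw [← Category.assoc, ← Category.assoc]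
      congr 1
      ext <;> simp
    · have e1 : prod.lift (0 : pullback ρ ρ ⟶ Y) (𝟙 _) ≫ prod.map (𝟙 Y) p₁ =
          p₁ ≫ prod.lift 0 (𝟙 T) := by ext <;> simp
      have e2 : prod.lift (0 : pullback ρ ρ ⟶ Y) (𝟙 _) ≫ prod.map (𝟙 Y) p₂ =
          p₂ ≫ prod.lift 0 (𝟙 T) := by ext <;> simp
      rw [← Category.assoc, ← Category.assoc, e1, e2, Category.assoc, Category.assoc,
        hφ2, ← hfac, ← Category.assoc, ← Category.assoc, pullback.condition]
  -- consequence: φ coequalizes any pair coequalized by prod.map 𝟙 ρ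
  have coeq : ∀ {W : C} (l r : W ⟶ Y ⨯ T),
      l ≫ prod.map (𝟙 Y) ρ = r ≫ prod.map (𝟙 Y) ρ → l ≫ φ = r ≫ φ := by
    intro W l r hlr
    have hfst : l ≫ prod.fst = r ≫ prod.fst := by
      have := hlr =≫ prod.fst
      simpa using this
    have hsnd : (l ≫ prod.snd) ≫ ρ = (r ≫ prod.snd) ≫ ρ := by
      have := hlr =≫ prod.snd
      simpa using this
    set k : W ⟶ pullback ρ ρ := pullback.lift (l ≫ prod.snd) (r ≫ prod.snd) hsnd with hk
    have hl : l = prod.lift (l ≫ prod.fst) k ≫ prod.map (𝟙 Y) p₁ := by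
      ext <;> simp [hk, hp₁, prod.lift_fst, prod.lift_snd, prod.lift_fst_assoc, prod.lift_snd_assoc, pullback.lift_fst, pullback.lift_snd, pullback.lift_fst_assoc, pullback.lift_snd_assoc]
    have hr : r = prod.lift (l ≫ prod.fst) k ≫ prod.map (𝟙 Y) p₂ := by
      ext <;> simp [hk, hp₂, hfst, prod.lift_fst, prod.lift_snd, prod.lift_fst_assoc, prod.lift_snd_assoc, pullback.lift_fst, pullback.lift_snd, pullback.lift_fst_assoc, pullback.lift_snd_assoc]
    rw [hl, hr, Category.assoc, Category.assoc, key]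
  -- prod.map 𝟙 ρ is the composite of an iso with a pullback of ρ
  set p : pullback ρ (prod.snd : Y ⨯ V ⟶ V) ⟶ Y ⨯ V := pullback.snd ρ prod.snd with hp
  obtain ⟨rp⟩ := hreg.2 ρ (prod.snd : Y ⨯ V ⟶ V) hρ
  set j : Y ⨯ T ⟶ pullback ρ (prod.snd : Y ⨯ V ⟶ V) :=
    pullback.lift prod.snd (prod.map (𝟙 Y) ρ) (by simp) with hj
  set j' : pullback ρ (prod.snd : Y ⨯ V ⟶ V) ⟶ Y ⨯ T :=
    prod.lift (pullback.snd ρ prod.snd ≫ prod.fst) (pullback.fst ρ prod.snd) with hj'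
  have hjj' : j ≫ j' = 𝟙 _ := by ext <;> simp [hj, hj', prod.lift_fst, prod.lift_snd, prod.lift_fst_assoc, prod.lift_snd_assoc, pullback.lift_fst, pullback.lift_snd, pullback.lift_fst_assoc, pullback.lift_snd_assoc]
  have hj'j : j' ≫ j = 𝟙 _ := by
    apply pullback.hom_ext
    · simp [hj, hj', prod.lift_fst, prod.lift_snd, prod.lift_fst_assoc, prod.lift_snd_assoc, pullback.lift_fst, pullback.lift_snd, pullback.lift_fst_assoc, pullback.lift_snd_assoc]
    · rw [Category.assoc]
      have : j ≫ pullback.snd ρ prod.snd = prod.map (𝟙 Y) ρ := by simp [hj, prod.lift_fst, prod.lift_snd, prod.lift_fst_assoc, prod.lift_snd_assoc, pullback.lift_fst, pullback.lift_snd, pullback.lift_fst_assoc, pullback.lift_snd_assoc]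
      rw [this]
      ext
      · simp [hj', prod.lift_fst, prod.lift_snd, prod.lift_fst_assoc, prod.lift_snd_assoc, pullback.lift_fst, pullback.lift_snd, pullback.lift_fst_assoc, pullback.lift_snd_assoc]
      · simp [hj', pullback.condition, prod.lift_fst, prod.lift_snd, prod.lift_fst_assoc, prod.lift_snd_assoc, pullback.lift_fst, pullback.lift_snd, pullback.lift_fst_assoc, pullback.lift_snd_assoc]
  have hjp : j ≫ p = prod.map (𝟙 Y) ρ := by simp [hj, hp, prod.lift_fst, prod.lift_snd, prod.lift_fst_assoc, prod.lift_snd_assoc, pullback.lift_fst, pullback.lift_snd, pullback.lift_fst_assoc, pullback.lift_snd_assoc]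
  -- descend j' ≫ φ along the regular epi p
  have hw : rp.left ≫ (j' ≫ φ) = rp.right ≫ (j' ≫ φ) := by
    rw [← Category.assoc, ← Category.assoc]
    apply coeq
    rw [Category.assoc, Category.assoc, ← hjp, ← Category.assoc, ← Category.assoc,
      ← Category.assoc, ← Category.assoc, Category.assoc rp.left, Category.assoc rp.right,
      hj'j, Category.comp_id, Category.comp_id, rp.w]
  set ψ : Y ⨯ V ⟶ X := Cofork.IsColimit.desc rp.isColimit (j' ≫ φ) hw with hψ
  have hpψ : p ≫ ψ = j' ≫ φ := Cofork.IsColimit.π_desc rp.isColimit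
  have hqψ : prod.map (𝟙 Y) ρ ≫ ψ = φ := by
    rw [← hjp, Category.assoc, hpψ, ← Category.assoc, hjj', Category.id_comp]
  refine ⟨ψ, ?_, ?_⟩
  · have : prod.lift (𝟙 Y) (0 : Y ⟶ T) ≫ prod.map (𝟙 Y) ρ =
        prod.lift (𝟙 Y) (0 : Y ⟶ V) := by ext <;> simp
    rw [← this, Category.assoc, hqψ, hφ1]
  · have hcancel : ρ ≫ prod.lift (0 : V ⟶ Y) (𝟙 V) ≫ ψ = ρ ≫ m := by
      have : prod.lift (0 : T ⟶ Y) (𝟙 T) ≫ prod.map (𝟙 Y) ρ =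
          ρ ≫ prod.lift (0 : V ⟶ Y) (𝟙 V) := by ext <;> simp
      rw [← Category.assoc, ← this, Category.assoc, hqψ, hφ2, hfac]
    exact (cancel_epi ρ).mp hcancel
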